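/- Along any solution of the normalized SEIR system with (s,e,i) ∈ Σ (i.e., s,e,i ≥ 0, s+e+i ≤ 1), the Lyapunov function V = εe + (ε+b)i satisfies d/dt V = i[εβs + εμe + μ(ε+b)i − (ε+b)(γ+μ+b)] ≤ i[max{εβ, εμ, μ(ε+b)} − (ε+b)(γ+μ+b)]. -/

import Mathlib

/-- Along solutions in Σ, the function V = ε e + (ε+b) i satisfies the stated
derivative identity and bound. -/
theorem seir_lyapunov_derivative_bound
    (b β μ ε γ : ℝ) (hb : 0 ≤ b) (hβ : 0 ≤ β) (hμ : 0 ≤ μ) (hε : 0 ≤ ε) (hγ : 0 ≤ γ)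
    (s e i : ℝ → ℝ) (t : ℝ)
    (hs : HasDerivAt s (b - b * s t - β * i t * s t + μ * i t * s t) t)
    (he : HasDerivAt e (β * i t * s t - (ε + b) * e t + μ * i t * e t) t)
    (hi : HasDerivAt i (ε * e t - (μ + γ + b) * i t + μ * (i t)^2) t)
    (hSigma : 0 ≤ s t ∧ 0 ≤ e t ∧ 0 ≤ i t ∧ s t + e t + i t ≤ 1) :
    HasDerivAt (fun τ => ε * e τ + (ε + b) * i τ)
      (i t * (ε * β * s t + ε * μ * e t + μ * (ε + b) * i t - (ε + b) * (γ + μ + b))) t ∧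
    i t * (ε * β * s t + ε * μ * e t + μ * (ε + b) * i t - (ε + b) * (γ + μ + b)) ≤
      i t * (max (max (ε * β) (ε * μ)) (μ * (ε + b)) - (ε + b) * (γ + μ + b)) := by
  obtain ⟨hs0, he0, hi0, hsum⟩ := hSigma
  constructor
  · have h : HasDerivAt (fun τ => ε * e τ + (ε + b) * i τ) _ t :=
        (he.const_mul ε).add (hi.const_mul (ε + b))
    convert h using 1
    ring
  · set M := max (max (ε * β) (ε * μ)) (μ * (ε + b)) with hM
    have hM0 : 0 ≤ M := le_trans (mul_nonneg hε hβ)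
      (le_trans (le_max_left _ _) (le_max_left _ _))
    have h1 : ε * β * s t ≤ M * s t :=
      mul_le_mul_of_nonneg_right (le_trans (le_max_left _ _) (le_max_left _ _)) hs0
    have h2 : ε * μ * e t ≤ M * e t :=
      mul_le_mul_of_nonneg_right (le_trans (le_max_right _ _) (le_max_left _ _)) he0
    have h3 : μ * (ε + b) * i t ≤ M * i t :=
      mul_le_mul_of_nonneg_right (le_max_right _ _) hi0
    have hle : ε * β * s t + ε * μ * e t + μ * (ε + b) * i t ≤ M := by
      calc ε * β * s t + ε * μ * e t + μ * (ε + b) * i t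
          ≤ M * s t + M * e t + M * i t := by linarith
        _ = M * (s t + e t + i t) := by ring
        _ ≤ M * 1 := mul_le_mul_of_nonneg_left hsum hM0
        _ = M := mul_one M
    exact mul_le_mul_of_nonneg_left (by linarith) hi0
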